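/- In an MSC, for every event e, the relation ≤ satisfies: e ≤ f if and only if there exists a sequence of distinct processes p₁,…,p_n and events e = e₁, f₁, e₂, f₂, …, e_n, f_n = f with e_i, f_i on process p_i, e_i →proc* f_i for all i, and f_i →msg e_{i+1} for all i < n. (In other words, ≤ equals the union over all repetition-free process sequences 𝕡 of the relations ≤_𝕡.) -/

import Mathlib

/-- A message sequence chart (MSC) over processes `P`, labels `A`, and event set `E`. -/
structure MSC (P A E : Type) [Fintype E] where
  proc : E → P
  lbl : E → A
  pnext : E → E → Prop
  msg : E → E → Prop
  pnext_proc : ∀ {e f}, pnext e f → proc e = proc f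
  pnext_succ_unique : ∀ {e f f'}, pnext e f → pnext e f' → f = f'
  pnext_pred_unique : ∀ {e e' f}, pnext e f → pnext e' f → e = e'
  msg_proc : ∀ {e f}, msg e f → proc e ≠ proc f
  msg_send_unique : ∀ {e f f'}, msg e f → msg e f' → f = f'
  msg_recv_unique : ∀ {e e' f}, msg e f → msg e' f → e = e'
  msg_not_send_recv : ∀ {e f g}, msg e f → ¬ msg g e
  acyclic : ∀ e, ¬ Relation.TransGen (fun a b => pnext a b ∨ msg a b) e e
  proc_total : ∀ {e f}, proc e = proc f →
    Relation.ReflTransGen pnext e f ∨ Relation.ReflTransGen pnext f e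
  fifo : ∀ {e e' f f'}, msg e f → msg e' f' → proc e = proc e' → proc f = proc f' →
    (Relation.ReflTransGen pnext e e' ↔ Relation.ReflTransGen pnext f f')

namespace MSC

variable {P A E : Type} [Fintype E]

/-- The edge relation `→proc ∪ →msg`. -/
def edge (M : MSC P A E) (e f : E) : Prop := M.pnext e f ∨ M.msg e f

/-- The partial order `≤ = (→proc ∪ →msg)*`. -/
def le (M : MSC P A E) (e f : E) : Prop := Relation.ReflTransGen M.edge e f

/-- The strict order `< = (→proc ∪ →msg)⁺`. -/
def lt (M : MSC P A E) (e f : E) : Prop := Relation.TransGen M.edge e f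

/-- `e ∥ f`: incomparability w.r.t. `≤`. -/
def par (M : MSC P A E) (e f : E) : Prop := ¬ M.le e f ∧ ¬ M.le f e

/-- `e ⋖ f`: strict order minus the direct process/message edges. -/
def cless (M : MSC P A E) (e f : E) : Prop := M.lt e f ∧ ¬ M.pnext e f ∧ ¬ M.msg e f

/-- The (reflexive) order along a single process: `→proc*`. -/
def pord (M : MSC P A E) (e f : E) : Prop := Relation.ReflTransGen M.pnext e f

/-- `Past_p(f) = {g ∈ E_p : g < f}`. -/
def PastP (M : MSC P A E) (p : P) (f : E) : Set E := {g | M.proc g = p ∧ M.lt g f}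

/-- `Fut_p(f) = {g ∈ E_p : f < g}`. -/
def FutP (M : MSC P A E) (p : P) (f : E) : Set E := {g | M.proc g = p ∧ M.lt f g}

/-- `Par_p(f) = {g ∈ E_p : g ∥ f}`. -/
def ParP (M : MSC P A E) (p : P) (f : E) : Set E := {g | M.proc g = p ∧ M.par g f}

/-- `S` is an interval of consecutive events on process `p`. -/
def IsInterval (M : MSC P A E) (p : P) (S : Set E) : Prop :=
  (∀ e ∈ S, M.proc e = p) ∧
  ∀ e f g, e ∈ S → g ∈ S → M.pord e f → M.pord f g → f ∈ S

/-- The interval `[e,e'] = {g ∈ E_p : e ≤ g ≤ e'}` on process `p`. -/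
def Intv (M : MSC P A E) (p : P) (e e' : E) : Set E :=
  {g | M.proc g = p ∧ M.pord e g ∧ M.pord g e'}

end MSC

/-- `e ≤_𝕡 f` for a process sequence `𝕡`. -/
def MSC.leSeq {P A E : Type} [Fintype E] (M : MSC P A E) : List P → E → E → Prop
  | [], _, _ => False
  | [p], e, f => M.proc e = p ∧ M.pord e f
  | p :: ps, e, f => M.proc e = p ∧ ∃ g h, M.pord e g ∧ M.msg g h ∧ M.leSeq ps h f

namespace MSC

variable {P A E : Type} [Fintype E] (M : MSC P A E)

lemma pord_le' {e f : E} (h : M.pord e f) : M.le e f :=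
  Relation.ReflTransGen.mono (fun _ _ h => Or.inl h) e f h

lemma pord_proc' {e f : E} (h : M.pord e f) : M.proc e = M.proc f := by
  induction h with
  | refl => rfl
  | tail _ h ih => exact ih.trans (M.pnext_proc h)

lemma no_cycle' {e g : E} (h1 : Relation.TransGen M.edge e g) (h2 : M.pord g e) : False :=
  M.acyclic e (h1.trans_left (M.pord_le' h2))

lemma leSeq_cons' {q : P} {ts : List P} (hts : ts ≠ []) {e f : E} :
    M.leSeq (q :: ts) e f ↔
      M.proc e = q ∧ ∃ g h, M.pord e g ∧ M.msg g h ∧ M.leSeq ts h f := by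
  cases ts with
  | nil => simp at hts
  | cons t ts => rfl

lemma leSeq_head' : ∀ {p : P} {ts : List P} {e f : E}, M.leSeq (p :: ts) e f → M.proc e = p := by
  intro p ts e f h
  cases ts with
  | nil => exact h.1
  | cons t ts => exact h.1

lemma leSeq_pord_pre' : ∀ (ps : List P) {e g f : E},
    M.pord e g → M.leSeq ps g f → M.leSeq ps e f := by
  intro ps
  cases ps with
  | nil => intro e g f _ h; exact h.elim
  | cons p ps =>
    cases ps with
    | nil =>
      intro e g f hpord h
      exact ⟨(M.pord_proc' hpord).trans h.1, hpord.trans h.2⟩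
    | cons q ps =>
      intro e g f hpord h
      obtain ⟨hp, a, b, h1, h2, h3⟩ := h
      exact ⟨(M.pord_proc' hpord).trans hp, a, b, hpord.trans h1, h2, h3⟩

lemma leSeq_le' : ∀ (ps : List P) {e f : E}, M.leSeq ps e f → M.le e f := by
  intro ps
  induction ps with
  | nil => intro e f h; exact h.elim
  | cons p ps ih =>
    cases ps with
    | nil => intro e f h; exact M.pord_le' h.2
    | cons q ps =>
      intro e f h
      obtain ⟨hp, a, b, h1, h2, h3⟩ := h
      exact ((M.pord_le' h1).tail (Or.inr h2)).trans (ih h3)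

lemma leSeq_pnext' : ∀ (ps : List P) {e g f : E},
    M.leSeq ps e g → M.pnext g f → M.leSeq ps e f := by
  intro ps
  induction ps with
  | nil => intro e g f h; exact h.elim
  | cons p ps ih =>
    cases ps with
    | nil => intro e g f h hn; exact ⟨h.1, h.2.tail hn⟩
    | cons q ps =>
      intro e g f h hn
      obtain ⟨hp, a, b, h1, h2, h3⟩ := h
      exact ⟨hp, a, b, h1, h2, ih h3 hn⟩

lemma leSeq_msg' : ∀ (ps : List P) {e g f : E},
    M.leSeq ps e g → M.msg g f → M.leSeq (ps ++ [M.proc f]) e f := by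
  intro ps
  induction ps with
  | nil => intro e g f h; exact h.elim
  | cons p ps ih =>
    cases ps with
    | nil =>
      intro e g f h hm
      exact ⟨h.1, g, f, h.2, hm, rfl, Relation.ReflTransGen.refl⟩
    | cons q ps =>
      intro e g f h hm
      obtain ⟨hp, a, b, h1, h2, h3⟩ := h
      exact ⟨hp, a, b, h1, h2, ih h3 hm⟩

lemma leSeq_split' : ∀ (l l' : List P), l ≠ [] → l' ≠ [] → ∀ {e f : E},
    M.leSeq (l ++ l') e f → ∃ g, Relation.TransGen M.edge e g ∧ M.leSeq l' g f := by
  intro l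
  induction l with
  | nil => intro l' h; exact absurd rfl h
  | cons p l ihl =>
    intro l' _ hl' e f h
    have hne : l ++ l' ≠ [] := by
      cases l' with
      | nil => exact absurd rfl hl'
      | cons x xs => simp
    rw [List.cons_append, M.leSeq_cons' hne] at h
    obtain ⟨hp, a, b, h1, h2, h3⟩ := h
    have hstep : Relation.TransGen M.edge e b :=
      Relation.TransGen.tail' (M.pord_le' h1) (Or.inr h2)
    cases l with
    | nil =>
      exact ⟨b, hstep, h3⟩
    | cons q l =>
      obtain ⟨g, hg1, hg2⟩ := ihl l' (by simp) hl' h3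
      exact ⟨g, hstep.trans hg1, hg2⟩

lemma leSeq_splice' : ∀ (l1 : List P) (p : P) (l2 l3 : List P) {e f : E},
    M.leSeq (l1 ++ p :: l2 ++ p :: l3) e f → M.leSeq (l1 ++ p :: l3) e f := by
  intro l1
  induction l1 with
  | nil =>
    intro p l2 l3 e f h
    have h' : M.leSeq ((p :: l2) ++ (p :: l3)) e f := by simpa using h
    obtain ⟨g, hg1, hg2⟩ := M.leSeq_split' (p :: l2) (p :: l3) (by simp) (by simp) h'
    have hpe : M.proc e = p := by
      have : M.leSeq (p :: (l2 ++ p :: l3)) e f := by simpa using h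
      exact M.leSeq_head' this
    have hpg : M.proc g = p := M.leSeq_head' hg2
    have := M.proc_total (hpe.trans hpg.symm)
    cases this with
    | inl hle => exact M.leSeq_pord_pre' _ hle hg2
    | inr hge => exact absurd (M.no_cycle' hg1 hge) (by simp)
  | cons q l1 ih =>
    intro p l2 l3 e f h
    have h' : M.leSeq (q :: (l1 ++ p :: l2 ++ p :: l3)) e f := by
      simpa using h
    rw [M.leSeq_cons' (by simp)] at h'
    obtain ⟨hp, a, b, h1, h2, h3⟩ := h'
    have h4 := ih p l2 l3 h3
    have : M.leSeq (q :: (l1 ++ p :: l3)) e f := by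
      rw [M.leSeq_cons' (by simp)]
      exact ⟨hp, a, b, h1, h2, h4⟩
    simpa using this

lemma exists_dup' {α : Type} : ∀ (l : List α), ¬ l.Nodup →
    ∃ (a : α) (l1 l2 l3 : List α), l = l1 ++ a :: l2 ++ a :: l3 := by
  intro l
  induction l with
  | nil => intro h; exact absurd List.nodup_nil h
  | cons x t ih =>
    intro h
    by_cases hx : x ∈ t
    · obtain ⟨l2, l3, rfl⟩ := List.append_of_mem hx
      exact ⟨x, [], l2, l3, rfl⟩
    · have ht : ¬ t.Nodup := by
        intro hn
        exact h (List.nodup_cons.mpr ⟨hx, hn⟩)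
      obtain ⟨a, l1, l2, l3, rfl⟩ := ih ht
      exact ⟨a, x :: l1, l2, l3, rfl⟩

lemma leSeq_nodup' : ∀ (n : ℕ) (ps : List P), ps.length ≤ n → ps ≠ [] → ∀ {e f : E},
    M.leSeq ps e f → ∃ qs : List P, qs ≠ [] ∧ qs.Nodup ∧ M.leSeq qs e f := by
  intro n
  induction n with
  | zero =>
    intro ps hlen hne
    cases ps with
    | nil => exact absurd rfl hne
    | cons p ps => simp at hlen
  | succ n ih =>
    intro ps hlen hne e f h
    by_cases hnd : ps.Nodup
    · exact ⟨ps, hne, hnd, h⟩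
    · obtain ⟨a, l1, l2, l3, rfl⟩ := exists_dup' ps hnd
      have h' := M.leSeq_splice' l1 a l2 l3 h
      have hlen' : (l1 ++ a :: l3).length ≤ n := by
        simp only [List.length_append, List.length_cons] at hlen ⊢
        omega
      exact ih (l1 ++ a :: l3) hlen' (by simp) h'

end MSC

/-- `≤` is the union of the relations `≤_𝕡` over non-empty
repetition-free process sequences `𝕡`. -/
theorem stmt8 {P A E : Type} [Fintype E] (M : MSC P A E) (e f : E) :
    M.le e f ↔ ∃ ps : List P, ps ≠ [] ∧ ps.Nodup ∧ M.leSeq ps e f := by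
  constructor
  · intro h
    have key : ∃ ps : List P, ps ≠ [] ∧ M.leSeq ps e f := by
      induction h with
      | refl => exact ⟨[M.proc e], by simp, rfl, Relation.ReflTransGen.refl⟩
      | tail _ hgf ih =>
        obtain ⟨ps, hne, hseq⟩ := ih
        cases hgf with
        | inl hn => exact ⟨ps, hne, M.leSeq_pnext' ps hseq hn⟩
        | inr hm =>
          exact ⟨ps ++ [M.proc _], by simp, M.leSeq_msg' ps hseq hm⟩
    obtain ⟨ps, hne, hseq⟩ := key
    exact M.leSeq_nodup' ps.length ps le_rfl hne hseq
  · rintro ⟨ps, _, _, h⟩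
    exact M.leSeq_le' ps h
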